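/- Let n ≥ 2 and let 0 ≤ a_1 ≤ … ≤ a_n. Let 𝒰_{n−1}(a) = {x ∈ (ℝ_+)^{n−1} : (1/(n−1)) ∑_{i=1}^{n−1} x_i ≥ (1/n) ∑_{k=1}^n a_k}. Then there is a constant C(n) > 0, depending only on n, such that ∫_{a_1}^{a_2} … ∫_{a_{n−1}}^{a_n} V_{n−1}(x_1,…,x_{n−1}) χ_{𝒰_{n−1}(a)}(x) dx_{n−1} … dx_1 ≥ C(n) V_n(a_1,…,a_n). -/

import Mathlib

open MeasureTheory

/-- The Vandermonde product `V_n(s) = ∏_{i<j} (s_j - s_i)`. -/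
noncomputable def vand (n : ℕ) (s : Fin n → ℝ) : ℝ :=
  ∏ p ∈ Finset.univ.filter (fun p : Fin n × Fin n => p.1 < p.2), (s p.2 - s p.1)

/-- Iterated integral, the `j`-th variable running from `s j` to `s (j+1)`. -/
noncomputable def iterInt : (k : ℕ) → ((Fin k → ℝ) → ℝ) → (Fin (k + 1) → ℝ) → ℝ
  | 0, f, _ => f (fun i => i.elim0)
  | (k + 1), f, s =>
      ∫ x in (s 0)..(s 1), iterInt k (fun u => f (Fin.cons x u)) (fun i => s i.succ)

lemma box_cons {k : ℕ} (s : Fin (k + 2) → ℝ) (x : ℝ) (u : Fin k → ℝ)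
    (hx : x ∈ Set.Icc (s 0) (s 1))
    (hu : ∀ j : Fin k, u j ∈ Set.Icc (s (j.castSucc.succ)) (s (j.succ.succ))) :
    ∀ j : Fin (k + 1), (Fin.cons x u : Fin (k+1) → ℝ) j ∈ Set.Icc (s j.castSucc) (s j.succ) := by
  intro j
  refine Fin.cases ?_ ?_ j
  · simpa using hx
  · intro i
    simpa using hu i

lemma iterInt_measurable (k : ℕ) : ∀ {α : Type} [MeasurableSpace α]
    (g : α → (Fin k → ℝ) → ℝ),
    (Measurable fun p : α × (Fin k → ℝ) => g p.1 p.2) →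
    ∀ s : Fin (k + 1) → ℝ, Measurable fun a => iterInt k (g a) s := by
  induction k with
  | zero =>
    intro α _ g hg s
    simp only [iterInt]
    exact hg.comp (measurable_id.prodMk measurable_const)
  | succ k ih =>
    intro α _ g hg s
    simp only [iterInt]
    have hc : Measurable (fun p : (α × ℝ) × (Fin k → ℝ) => (p.1.1, (Fin.cons p.1.2 p.2 : Fin k.succ → ℝ))) := by
      refine (measurable_fst.comp measurable_fst).prodMk ?_
      refine measurable_pi_lambda _ (fun i => ?_)
      refine Fin.cases ?_ ?_ i
      · simpa [Function.comp_def] using measurable_snd.comp measurable_fst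
      · intro j
        simpa [Function.comp_def] using (measurable_pi_apply j).comp measurable_snd
    have hg2 : Measurable fun p : (α × ℝ) × (Fin k → ℝ) =>
        (fun b : α × ℝ => fun u => g b.1 (Fin.cons b.2 u)) p.1 p.2 := hg.comp hc
    have hG := ih (fun b : α × ℝ => fun u => g b.1 (Fin.cons b.2 u)) hg2 (fun i => s i.succ)
    have hG' : Measurable fun p : α × ℝ =>
        iterInt k (fun u => g p.1 (Fin.cons p.2 u)) (fun i => s i.succ) := hG
    have m1 : Measurable fun a : α =>
        ∫ x in Set.Ioc (s 0) (s 1),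
          iterInt k (fun u => g a (Fin.cons x u)) (fun i => s i.succ) :=
      (hG'.stronglyMeasurable.integral_prod_right').measurable
    have m2 : Measurable fun a : α =>
        ∫ x in Set.Ioc (s 1) (s 0),
          iterInt k (fun u => g a (Fin.cons x u)) (fun i => s i.succ) :=
      (hG'.stronglyMeasurable.integral_prod_right').measurable
    have : (fun a : α => ∫ x in (s 0)..(s 1),
        iterInt k (fun u => g a (Fin.cons x u)) (fun i => s i.succ)) =
        fun a : α => (∫ x in Set.Ioc (s 0) (s 1),
            iterInt k (fun u => g a (Fin.cons x u)) (fun i => s i.succ)) -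
          ∫ x in Set.Ioc (s 1) (s 0),
            iterInt k (fun u => g a (Fin.cons x u)) (fun i => s i.succ) := by
      funext a; rfl
    rw [this]
    exact m1.sub m2

lemma iterInt_nonneg (k : ℕ) : ∀ (f : (Fin k → ℝ) → ℝ) (s : Fin (k + 1) → ℝ),
    (∀ j : Fin k, s j.castSucc ≤ s j.succ) →
    (∀ x, (∀ j, x j ∈ Set.Icc (s j.castSucc) (s j.succ)) → 0 ≤ f x) →
    0 ≤ iterInt k f s := by
  induction k with
  | zero =>
    intro f s _ hf
    exact hf _ (fun j => j.elim0)
  | succ k ih =>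
    intro f s hadj hf
    simp only [iterInt]
    have h01 : s 0 ≤ s 1 := by simpa using hadj 0
    refine intervalIntegral.integral_nonneg h01 (fun x hx => ?_)
    refine ih _ _ (fun j => hadj j.succ) (fun u hu => ?_)
    exact hf _ (box_cons s x u hx hu)

lemma iterInt_abs_le (k : ℕ) : ∀ (f : (Fin k → ℝ) → ℝ) (s : Fin (k + 1) → ℝ) (B : ℝ),
    (∀ j : Fin k, s j.castSucc ≤ s j.succ) →
    (∀ x, (∀ j, x j ∈ Set.Icc (s j.castSucc) (s j.succ)) → |f x| ≤ B) →
    |iterInt k f s| ≤ B * ∏ j : Fin k, (s j.succ - s j.castSucc) := by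
  induction k with
  | zero =>
    intro f s B _ hf
    simpa [iterInt] using hf _ (fun j => j.elim0)
  | succ k ih =>
    intro f s B hadj hf
    simp only [iterInt]
    have h01 : s 0 ≤ s 1 := by simpa using hadj 0
    have key : ∀ x ∈ Set.uIoc (s 0) (s 1),
        ‖iterInt k (fun u => f (Fin.cons x u)) (fun i => s i.succ)‖ ≤
          B * ∏ j : Fin k, (s j.succ.succ - s j.castSucc.succ) := by
      intro x hx
      rw [Set.uIoc_of_le h01] at hx
      have hx' : x ∈ Set.Icc (s 0) (s 1) := Set.Ioc_subset_Icc_self hx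
      have := ih (fun u => f (Fin.cons x u)) (fun i => s i.succ) B
        (fun j => by simpa using hadj j.succ)
        (fun u hu => hf _ (box_cons s x u hx' (fun j => by
          simpa using hu j)))
      simpa using this
    have := intervalIntegral.norm_integral_le_of_norm_le_const key
    calc |∫ x in (s 0)..(s 1), iterInt k (fun u => f (Fin.cons x u)) (fun i => s i.succ)|
        ≤ (B * ∏ j : Fin k, (s j.succ.succ - s j.castSucc.succ)) * |s 1 - s 0| := this
      _ = B * ∏ j : Fin (k + 1), (s j.succ - s j.castSucc) := by
          rw [abs_of_nonneg (by linarith)]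
          rw [Fin.prod_univ_succ (f := fun j : Fin (k + 1) => s j.succ - s j.castSucc)]
          simp
          ring

lemma iterInt_ge (k : ℕ) : ∀ (f : (Fin k → ℝ) → ℝ) (s : Fin (k + 1) → ℝ)
    (p q : Fin k → ℝ) (K B : ℝ),
    Measurable f →
    (∀ j : Fin k, s j.castSucc ≤ p j) →
    (∀ j : Fin k, p j ≤ q j) →
    (∀ j : Fin k, q j ≤ s j.succ) →
    0 ≤ K →
    (∀ x, (∀ j, x j ∈ Set.Icc (s j.castSucc) (s j.succ)) → 0 ≤ f x) →
    (∀ x, (∀ j, x j ∈ Set.Icc (s j.castSucc) (s j.succ)) → |f x| ≤ B) →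
    (∀ x, (∀ j, x j ∈ Set.Icc (p j) (q j)) → K ≤ f x) →
    K * ∏ j : Fin k, (q j - p j) ≤ iterInt k f s := by
  induction k with
  | zero =>
    intro f s p q K B _ _ _ _ _ _ _ hK
    simpa [iterInt] using hK _ (fun j => j.elim0)
  | succ k ih =>
    intro f s p q K B hmeas h1 h2 h3 hK hnn hbd hKle
    have hadj : ∀ j : Fin (k + 1), s j.castSucc ≤ s j.succ :=
      fun j => le_trans (h1 j) (le_trans (h2 j) (h3 j))
    have h01 : s 0 ≤ s 1 := by simpa using hadj 0
    have hsp : s 0 ≤ p 0 := by simpa using h1 0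
    have hpq : p 0 ≤ q 0 := h2 0
    have hqs : q 0 ≤ s 1 := by simpa using h3 0
    set s' : Fin (k + 1) → ℝ := fun i => s i.succ with hs'
    set F : ℝ → ℝ := fun x => iterInt k (fun u => f (Fin.cons x u)) s' with hF
    -- measurability of F
    have hFmeas : Measurable F := by
      apply iterInt_measurable k (g := fun x : ℝ => fun u => f (Fin.cons x u))
      have hc : Measurable (fun pr : ℝ × (Fin k → ℝ) => (Fin.cons pr.1 pr.2 : Fin k.succ → ℝ)) := by
        refine measurable_pi_lambda _ (fun i => ?_)
        refine Fin.cases ?_ ?_ i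
        · simpa using (measurable_fst : Measurable fun pr : ℝ × (Fin k → ℝ) => pr.1)
        · intro j
          simpa [Function.comp_def] using (measurable_pi_apply j).comp
            (measurable_snd : Measurable fun pr : ℝ × (Fin k → ℝ) => pr.2)
      exact hmeas.comp hc
    -- tail adjacency
    have hadj' : ∀ j : Fin k, s' j.castSucc ≤ s' j.succ := by
      intro j; simpa [hs'] using hadj j.succ
    -- bound for F on [s 0, s 1]
    set B' : ℝ := B * ∏ j : Fin k, (s' j.succ - s' j.castSucc) with hB'
    have hFbd : ∀ x ∈ Set.Icc (s 0) (s 1), |F x| ≤ B' := by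
      intro x hx
      refine iterInt_abs_le k _ _ B hadj' (fun u hu => ?_)
      refine hbd _ (box_cons s x u hx (fun j => by simpa [hs'] using hu j))
    -- nonnegativity of F on [s 0, s 1]
    have hFnn : ∀ x ∈ Set.Icc (s 0) (s 1), 0 ≤ F x := by
      intro x hx
      refine iterInt_nonneg k _ _ hadj' (fun u hu => ?_)
      exact hnn _ (box_cons s x u hx (fun j => by simpa [hs'] using hu j))
    -- interval integrability of F on [s 0, s 1]
    have hInt : IntervalIntegrable F volume (s 0) (s 1) := by
      rw [intervalIntegrable_iff]
      refine Integrable.mono' (g := fun _ => |B'|) (integrableOn_const ?_)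
        (hFmeas.aestronglyMeasurable.restrict) ?_
      · rw [Set.uIoc_of_le h01]
        exact measure_Ioc_lt_top.ne
      · refine (ae_restrict_iff' measurableSet_uIoc).2 (ae_of_all _ (fun x hx => ?_))
        rw [Set.uIoc_of_le h01] at hx
        exact le_trans (hFbd x (Set.Ioc_subset_Icc_self hx)) (le_abs_self _)
    have hsub1 : Set.uIcc (s 0) (p 0) ⊆ Set.uIcc (s 0) (s 1) := by
      rw [Set.uIcc_of_le h01, Set.uIcc_of_le hsp]
      exact Set.Icc_subset_Icc le_rfl (le_trans hpq hqs)
    have hsub2 : Set.uIcc (p 0) (q 0) ⊆ Set.uIcc (s 0) (s 1) := by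
      rw [Set.uIcc_of_le h01, Set.uIcc_of_le hpq]
      exact Set.Icc_subset_Icc hsp hqs
    have hsub3 : Set.uIcc (q 0) (s 1) ⊆ Set.uIcc (s 0) (s 1) := by
      rw [Set.uIcc_of_le h01, Set.uIcc_of_le hqs]
      exact Set.Icc_subset_Icc (le_trans hsp hpq) le_rfl
    have hsub4 : Set.uIcc (p 0) (s 1) ⊆ Set.uIcc (s 0) (s 1) := by
      rw [Set.uIcc_of_le h01, Set.uIcc_of_le (le_trans hpq hqs)]
      exact Set.Icc_subset_Icc hsp le_rfl
    have i1 := hInt.mono_set hsub1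
    have i2 := hInt.mono_set hsub2
    have i3 := hInt.mono_set hsub3
    have i4 := hInt.mono_set hsub4
    have e1 : (∫ x in (s 0)..(p 0), F x) + ∫ x in (p 0)..(s 1), F x = ∫ x in (s 0)..(s 1), F x :=
      intervalIntegral.integral_add_adjacent_intervals i1 i4
    have e2 : (∫ x in (p 0)..(q 0), F x) + ∫ x in (q 0)..(s 1), F x = ∫ x in (p 0)..(s 1), F x :=
      intervalIntegral.integral_add_adjacent_intervals i2 i3
    -- middle lower bound
    set K' : ℝ := K * ∏ j : Fin k, (q j.succ - p j.succ) with hK'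
    have hmid : (q 0 - p 0) * K' ≤ ∫ x in (p 0)..(q 0), F x := by
      have hconst : ∫ _x in (p 0)..(q 0), K' = (q 0 - p 0) • K' := intervalIntegral.integral_const K'
      rw [smul_eq_mul] at hconst
      rw [← hconst]
      refine intervalIntegral.integral_mono_on hpq (intervalIntegrable_const) i2 ?_
      intro x hx
      have hx' : x ∈ Set.Icc (s 0) (s 1) :=
        Set.Icc_subset_Icc hsp hqs hx
      refine ih (fun u => f (Fin.cons x u)) s' (fun j => p j.succ) (fun j => q j.succ) K B
        (hmeas.comp (by
          refine measurable_pi_lambda _ (fun i => ?_)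
          refine Fin.cases ?_ ?_ i
          · simpa using (measurable_const : Measurable fun _ : Fin k → ℝ => x)
          · intro j; simpa using measurable_pi_apply j))
        (fun j => by simpa [hs'] using h1 j.succ)
        (fun j => h2 j.succ)
        (fun j => by simpa [hs'] using h3 j.succ)
        hK
        (fun u hu => hnn _ (box_cons s x u hx' (fun j => by
          simpa [hs'] using hu j)))
        (fun u hu => hbd _ (box_cons s x u hx' (fun j => by
          simpa [hs'] using hu j)))
        (fun u hu => hKle _ ?_)
      intro j
      refine Fin.cases ?_ ?_ j
      · simpa using hx
      · intro i; simpa using hu i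
    have hlow : 0 ≤ ∫ x in (s 0)..(p 0), F x :=
      intervalIntegral.integral_nonneg hsp
        (fun x hx => hFnn x (Set.Icc_subset_Icc le_rfl (le_trans hpq hqs) hx))
    have hhigh : 0 ≤ ∫ x in (q 0)..(s 1), F x :=
      intervalIntegral.integral_nonneg hqs
        (fun x hx => hFnn x (Set.Icc_subset_Icc (le_trans hsp hpq) le_rfl hx))
    have goal_eq : iterInt (k + 1) f s = ∫ x in (s 0)..(s 1), F x := rfl
    rw [goal_eq, ← e1, ← e2]
    have hKprod : K * ∏ j : Fin (k + 1), (q j - p j) = (q 0 - p 0) * K' := by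
      rw [hK', Fin.prod_univ_succ (f := fun j : Fin (k + 1) => q j - p j)]
      ring
    rw [hKprod]
    linarith [hmid, hlow, hhigh]

lemma prod_split (n : ℕ) (F : Fin (n + 1) × Fin (n + 1) → ℝ) :
    ∏ p ∈ Finset.univ.filter (fun p : Fin (n + 1) × Fin (n + 1) => p.1 < p.2), F p
    = (∏ j : Fin n, F (j.castSucc, j.succ)) *
      ∏ p ∈ Finset.univ.filter (fun p : Fin n × Fin n => p.1 < p.2),
        F (p.1.castSucc, p.2.succ) := by
  have step1 : ∏ p ∈ Finset.univ.filter (fun p : Fin (n + 1) × Fin (n + 1) => p.1 < p.2), F p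
      = ∏ q ∈ Finset.univ.filter (fun q : Fin n × Fin n => q.1 ≤ q.2),
          F (q.1.castSucc, q.2.succ) := by
    symm
    refine Finset.prod_bij (fun q _ => (q.1.castSucc, q.2.succ)) ?_ ?_ ?_ ?_
    · intro q hq
      simp only [Finset.mem_filter, Finset.mem_univ, true_and] at hq ⊢
      rw [Fin.le_def] at hq
      rw [Fin.lt_def]
      simp only [Fin.coe_castSucc, Fin.val_succ]
      omega
    · intro q1 h1 q2 h2 heq
      have e1 : q1.1.castSucc = q2.1.castSucc := congrArg Prod.fst heq
      have e2 : q1.2.succ = q2.2.succ := congrArg Prod.snd heq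
      exact Prod.ext (Fin.castSucc_injective _ e1) (Fin.succ_injective _ e2)
    · intro b hb
      simp only [Finset.mem_filter, Finset.mem_univ, true_and] at hb
      rw [Fin.lt_def] at hb
      have hb2 : (b.2 : ℕ) ≠ 0 := by omega
      have hb1 : (b.1 : ℕ) < n := by have := b.2.isLt; omega
      refine ⟨(⟨b.1, hb1⟩, ⟨(b.2 : ℕ) - 1, by have := b.2.isLt; omega⟩), ?_, ?_⟩
      · simp only [Finset.mem_filter, Finset.mem_univ, true_and]
        rw [Fin.le_def]
        simp only
        omega
      · refine Prod.ext (Fin.ext ?_) (Fin.ext ?_)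
        · simp
        · simp only [Fin.val_succ]
          omega
    · intro a ha; rfl
  rw [step1]
  rw [← Finset.prod_filter_mul_prod_filter_not
    (Finset.univ.filter (fun q : Fin n × Fin n => q.1 ≤ q.2)) (fun q => q.1 = q.2)]
  congr 1
  · rw [Finset.filter_filter]
    have hset : (Finset.univ.filter fun q : Fin n × Fin n => q.1 ≤ q.2 ∧ q.1 = q.2)
        = Finset.univ.filter (fun q : Fin n × Fin n => q.1 = q.2) := by
      apply Finset.filter_congr
      intro q _
      constructor
      · exact fun h => h.2
      · exact fun h => ⟨le_of_eq h, h⟩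
    rw [hset]
    symm
    refine Finset.prod_bij (fun (j : Fin n) _ => (j, j)) ?_ ?_ ?_ ?_
    · intro j _; simp
    · intro j1 _ j2 _ h
      exact congrArg Prod.fst h
    · intro q hq
      simp only [Finset.mem_filter, Finset.mem_univ, true_and] at hq
      exact ⟨q.1, Finset.mem_univ _, Prod.ext rfl hq⟩
    · intro j _; rfl
  · rw [Finset.filter_filter]
    congr 1
    apply Finset.filter_congr
    intro q _
    constructor
    · exact fun h => lt_of_le_of_ne h.1 h.2
    · exact fun h => ⟨le_of_lt h, ne_of_lt h⟩


lemma mean_arith (T S a0 X M2 : ℝ) (hmul : (T - a0 - S) * M2 ≤ X * M2)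
    (hS2 : S * M2 = T - M2 * a0) : T * (M2 - 1) ≤ X * M2 := by nlinarith [hmul, hS2]

lemma diag_arith (gj l M1 M2 : ℝ) (h : gj ≤ l * (M1 * M2)) (hl : 0 ≤ l)
    (h12 : M1 ≤ M2) (hM2 : 0 < M2) :
    gj * 3 ≤ l * (3 * M2 ^ 2) := by
  nlinarith [mul_nonneg (mul_nonneg hl (sub_nonneg.2 h12)) hM2.le]

lemma pair_arith (a2 a1 a1c l1 l2 M : ℝ) (hd : l2 ≤ a2 - a1) (hd0 : 0 ≤ a2 - a1)
    (hM : 2 ≤ M) (he : a1 - a1c ≤ l1 * (M * M)) :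
    a2 - a1c ≤ (a2 - 2 * l2 / 3 - (a1 - l1 / 3)) * (3 * M ^ 2) := by
  nlinarith [mul_nonneg (sub_nonneg.2 hd) (sq_nonneg M),
    mul_nonneg hd0 (by nlinarith : (0:ℝ) ≤ M ^ 2 - 1)]

set_option maxHeartbeats 1000000 in
theorem stmt8 (m : ℕ) :
    ∃ C : ℝ, 0 < C ∧
      ∀ a : Fin (m + 2) → ℝ, 0 ≤ a 0 → Monotone a →
        iterInt (m + 1)
            (fun x =>
              if (∀ i, 0 ≤ x i) ∧
                  (∑ i : Fin (m + 1), x i) / (m + 1) ≥ (∑ k : Fin (m + 2), a k) / (m + 2)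
              then vand (m + 1) x else 0) a
          ≥ C * vand (m + 2) a := by
  set P2 : Finset (Fin (m + 2) × Fin (m + 2)) :=
    Finset.univ.filter (fun p : Fin (m + 2) × Fin (m + 2) => p.1 < p.2) with hP2
  set P1 : Finset (Fin (m + 1) × Fin (m + 1)) :=
    Finset.univ.filter (fun p : Fin (m + 1) × Fin (m + 1) => p.1 < p.2) with hP1
  refine ⟨(1 / (3 * ((m : ℝ) + 2) ^ 2)) ^ P2.card, by positivity, ?_⟩
  intro a h0 ha
  set f : (Fin (m + 1) → ℝ) → ℝ := fun x =>
    if (∀ i, 0 ≤ x i) ∧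
        (∑ i : Fin (m + 1), x i) / (m + 1) ≥ (∑ k : Fin (m + 2), a k) / (m + 2)
    then vand (m + 1) x else 0 with hf
  set M2 : ℝ := (m : ℝ) + 2 with hM2
  set M1 : ℝ := (m : ℝ) + 1 with hM1
  set c : ℝ := 1 / (3 * M2 ^ 2) with hc
  have hM1pos : 0 < M1 := by rw [hM1]; positivity
  have hM2pos : 0 < M2 := by rw [hM2]; positivity
  have hM12 : M1 ≤ M2 := by rw [hM1, hM2]; linarith
  have hM2ge2 : (2 : ℝ) ≤ M2 := by
    rw [hM2]; have : (0:ℝ) ≤ (m : ℝ) := Nat.cast_nonneg m; linarith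
  have hcpos : 0 < c := by rw [hc]; positivity
  set T : ℝ := ∑ k : Fin (m + 2), a k with hT
  set S : ℝ := (∑ k : Fin (m + 2), (a k - a 0)) / M2 with hS
  set g : Fin (m + 1) → ℝ := fun j => a j.succ - a j.castSucc with hg
  set lam : Fin (m + 1) → ℝ := fun j => min (g j) (S / M1) with hlam
  set pp : Fin (m + 1) → ℝ := fun j => a j.succ - 2 * lam j / 3 with hpp
  set qq : Fin (m + 1) → ℝ := fun j => a j.succ - lam j / 3 with hqq
  have hgdef : ∀ j, g j = a j.succ - a j.castSucc := fun _ => rfl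
  have hppdef : ∀ j, pp j = a j.succ - 2 * lam j / 3 := fun _ => rfl
  have hqqdef : ∀ j, qq j = a j.succ - lam j / 3 := fun _ => rfl
  have hg0 : ∀ j, 0 ≤ g j := fun j => sub_nonneg.2 (ha (Fin.castSucc_lt_succ (i := j)).le)
  have hak : ∀ k, 0 ≤ a k - a 0 := fun k => sub_nonneg.2 (ha (Fin.zero_le k))
  have hS0 : 0 ≤ S := div_nonneg (Finset.sum_nonneg fun k _ => hak k) hM2pos.le
  have hlam0 : ∀ j, 0 ≤ lam j := fun j => le_min (hg0 j) (div_nonneg hS0 hM1pos.le)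
  have hlamg : ∀ j, lam j ≤ g j := fun j => min_le_left _ _
  have hlamS : ∀ j, lam j ≤ S / M1 := fun j => min_le_right _ _
  have hS2 : S * M2 = ∑ k : Fin (m + 2), (a k - a 0) := by
    rw [hS]; field_simp
  have hsum_ge : ∀ j : Fin (m + 1), g j ≤ ∑ k : Fin (m + 2), (a k - a 0) := by
    intro j
    have h1 : g j ≤ a j.succ - a 0 := by
      have := ha (Fin.zero_le j.castSucc)
      rw [hgdef]; linarith
    refine le_trans h1 ?_
    exact Finset.single_le_sum (f := fun k : Fin (m + 2) => a k - a 0)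
      (fun k _ => hak k) (Finset.mem_univ j.succ)
  have hlam_ge' : ∀ j, g j ≤ lam j * (M1 * M2) := by
    intro j
    by_cases hc1 : g j ≤ S / M1
    · have heq : lam j = g j := min_eq_left hc1
      rw [heq]
      have h11 : 1 ≤ M1 * M2 := by nlinarith
      nlinarith [hg0 j]
    · have heq : lam j = S / M1 := min_eq_right (le_of_not_ge hc1)
      rw [heq]
      have h2 : S / M1 * (M1 * M2) = S * M2 := by field_simp
      rw [h2, hS2]
      exact hsum_ge j
  have hmono_pair : ∀ p : Fin (m + 1) × Fin (m + 1), p.1 < p.2 →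
      a p.1.succ ≤ a p.2.castSucc := by
    intro p hp
    apply ha
    rw [Fin.le_def]
    rw [Fin.lt_def] at hp
    simp only [Fin.val_succ, Fin.coe_castSucc]
    omega
  -- endpoints
  have h1' : ∀ j : Fin (m + 1), a j.castSucc ≤ pp j := by
    intro j
    have h := hlamg j
    rw [hgdef j] at h
    have h2 := hlam0 j
    rw [hppdef]
    linarith
  have h2' : ∀ j : Fin (m + 1), pp j ≤ qq j := by
    intro j; rw [hppdef, hqqdef]; linarith [hlam0 j]
  have h3' : ∀ j : Fin (m + 1), qq j ≤ a j.succ := by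
    intro j; rw [hqqdef]; linarith [hlam0 j]
  -- measurability of the integrand
  have hvmeas : Measurable (vand (m + 1)) := by
    apply Finset.measurable_prod
    intro p _
    exact (measurable_pi_apply p.2).sub (measurable_pi_apply p.1)
  have hmeas : Measurable f := by
    rw [hf]
    refine Measurable.ite ?_ hvmeas measurable_const
    have e : {x : Fin (m + 1) → ℝ | (∀ i, 0 ≤ x i) ∧
        (∑ i : Fin (m + 1), x i) / (m + 1) ≥ (∑ k : Fin (m + 2), a k) / (m + 2)}
        = {x : Fin (m + 1) → ℝ | ∀ i, 0 ≤ x i} ∩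
          {x : Fin (m + 1) → ℝ |
            (∑ k : Fin (m + 2), a k) / ((m : ℝ) + 2) ≤ (∑ i : Fin (m + 1), x i) / ((m : ℝ) + 1)} := rfl
    rw [e]
    refine MeasurableSet.inter ?_ ?_
    · rw [Set.setOf_forall]
      exact MeasurableSet.iInter fun i =>
        measurableSet_le measurable_const (measurable_pi_apply i)
    · refine measurableSet_le measurable_const ?_
      exact (Finset.measurable_sum Finset.univ fun i _ => measurable_pi_apply i).div_const _
  -- global bound on the box
  set Bd : ℝ := ∏ _p ∈ P1, (a (Fin.last (m + 1)) - a 0) with hBd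
  have hrange : ∀ (x : Fin (m + 1) → ℝ),
      (∀ j, x j ∈ Set.Icc (a j.castSucc) (a j.succ)) →
      ∀ j, a 0 ≤ x j ∧ x j ≤ a (Fin.last (m + 1)) := by
    intro x hx j
    exact ⟨le_trans (ha (Fin.zero_le _)) (hx j).1,
      le_trans (hx j).2 (ha (Fin.le_last _))⟩
  have hbd : ∀ x, (∀ j : Fin (m + 1), x j ∈ Set.Icc (a j.castSucc) (a j.succ)) →
      |f x| ≤ Bd := by
    intro x hx
    have hBd0 : ∀ p ∈ P1, (0:ℝ) ≤ a (Fin.last (m + 1)) - a 0 :=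
      fun p _ => sub_nonneg.2 (ha (Fin.zero_le _))
    simp only [hf]
    by_cases hcond : (∀ i, 0 ≤ x i) ∧
        (∑ i : Fin (m + 1), x i) / (m + 1) ≥ (∑ k : Fin (m + 2), a k) / (m + 2)
    · rw [if_pos hcond]
      rw [vand, Finset.abs_prod]
      refine Finset.prod_le_prod (fun p _ => abs_nonneg _) ?_
      intro p _
      have q1 := hrange x hx p.1
      have q2 := hrange x hx p.2
      rw [abs_le]
      constructor <;> linarith
    · rw [if_neg hcond, abs_zero]
      exact Finset.prod_nonneg hBd0
  -- nonnegativity on the box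
  have hnn : ∀ x, (∀ j : Fin (m + 1), x j ∈ Set.Icc (a j.castSucc) (a j.succ)) →
      0 ≤ f x := by
    intro x hx
    simp only [hf]
    by_cases hcond : (∀ i, 0 ≤ x i) ∧
        (∑ i : Fin (m + 1), x i) / (m + 1) ≥ (∑ k : Fin (m + 2), a k) / (m + 2)
    · rw [if_pos hcond, vand]
      refine Finset.prod_nonneg ?_
      intro p hp
      have hplt : p.1 < p.2 := by
        simp only [Finset.mem_filter, Finset.mem_univ, true_and] at hp
        exact hp
      have := hmono_pair p hplt
      have q1 := (hx p.1).2
      have q2 := (hx p.2).1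
      linarith
    · rw [if_neg hcond]
  -- the constant K
  set K : ℝ := ∏ p ∈ P1, (pp p.2 - qq p.1) with hK
  have hfac : ∀ p ∈ P1, (0:ℝ) ≤ pp p.2 - qq p.1 := by
    intro p hp
    have hplt : p.1 < p.2 := by
      rw [hP1] at hp
      simp only [Finset.mem_filter, Finset.mem_univ, true_and] at hp
      exact hp
    have hd : lam p.2 ≤ a p.2.succ - a p.1.succ := by
      have h1 := hlamg p.2
      rw [hgdef] at h1
      have := hmono_pair p hplt
      linarith
    rw [hppdef, hqqdef]
    linarith [hlam0 p.1, hlam0 p.2, hd]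
  have hK0 : 0 ≤ K := Finset.prod_nonneg hfac
  -- K lower bound on the subbox
  have hKle : ∀ x, (∀ j : Fin (m + 1), x j ∈ Set.Icc (pp j) (qq j)) → K ≤ f x := by
    intro x hx
    have hppx : ∀ j, pp j ≤ x j := fun j => (hx j).1
    have hqqx : ∀ j, x j ≤ qq j := fun j => (hx j).2
    have hpos : ∀ i, 0 ≤ x i := by
      intro i
      have := h1' i
      have := ha (Fin.zero_le i.castSucc)
      linarith [hppx i]
    have hmean : (∑ i : Fin (m + 1), x i) / (m + 1) ≥ (∑ k : Fin (m + 2), a k) / (m + 2) := by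
      rw [ge_iff_le, div_le_div_iff₀ (by positivity) (by positivity)]
      have hxi : ∀ j, a j.succ - lam j ≤ x j := by
        intro j
        have h := hppx j
        rw [hppdef] at h
        linarith [hlam0 j]
      have hsum1 : ∑ j : Fin (m + 1), (a j.succ - lam j) ≤ ∑ i : Fin (m + 1), x i :=
        Finset.sum_le_sum fun j _ => hxi j
      have hsum2 : ∑ j : Fin (m + 1), a j.succ = T - a 0 := by
        rw [hT, Fin.sum_univ_succ (f := fun k : Fin (m + 2) => a k)]
        ring
      have hsum3 : ∑ j : Fin (m + 1), lam j ≤ S := by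
        calc ∑ j : Fin (m + 1), lam j ≤ ∑ _j : Fin (m + 1), S / M1 :=
              Finset.sum_le_sum fun j _ => hlamS j
          _ = (m + 1 : ℕ) • (S / M1) := by
              rw [Finset.sum_const, Finset.card_univ, Fintype.card_fin]
          _ = S := by
              rw [nsmul_eq_mul]
              push_cast
              rw [← hM1]
              field_simp
      have hsx : T - a 0 - S ≤ ∑ i : Fin (m + 1), x i := by
        rw [Finset.sum_sub_distrib, hsum2] at hsum1
        linarith
      have hS2' : S * M2 = T - M2 * a 0 := by
        rw [hS2, hT, Finset.sum_sub_distrib, Finset.sum_const, Finset.card_univ,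
          Fintype.card_fin, nsmul_eq_mul, hM2]
        push_cast
        ring
      have hmul := mul_le_mul_of_nonneg_right hsx hM2pos.le
      have hgoal : T * M1 ≤ (∑ i : Fin (m + 1), x i) * M2 := by
        have hM1M2 : M1 = M2 - 1 := by rw [hM1, hM2]; ring
        rw [hM1M2]
        exact mean_arith T S (a 0) _ M2 hmul hS2'
      rw [hM1, hM2] at hgoal
      exact hgoal
    have hcond : (∀ i, 0 ≤ x i) ∧
        (∑ i : Fin (m + 1), x i) / (m + 1) ≥ (∑ k : Fin (m + 2), a k) / (m + 2) :=
      ⟨hpos, hmean⟩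
    simp only [hf]
    rw [if_pos hcond, vand]
    refine Finset.prod_le_prod hfac ?_
    intro p hp
    have := hppx p.2
    have := hqqx p.1
    linarith
  have main := iterInt_ge (m + 1) f a pp qq K Bd hmeas h1' h2' h3' hK0 hnn hbd hKle
  rw [ge_iff_le]
  refine le_trans ?_ main
  -- pure algebra from here
  have hqqpp : ∀ j, qq j - pp j = lam j / 3 := by
    intro j; rw [hppdef, hqqdef]; ring
  have e0 : ∏ p ∈ P2, (c * (a p.2 - a p.1)) = c ^ P2.card * vand (m + 2) a := by
    rw [Finset.prod_mul_distrib, Finset.prod_const]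
    rfl
  have hA : ∏ j : Fin (m + 1), (c * (a j.succ - a j.castSucc)) ≤
      ∏ j : Fin (m + 1), (qq j - pp j) := by
    refine Finset.prod_le_prod (fun j _ => mul_nonneg hcpos.le (by rw [← hgdef]; exact hg0 j)) ?_
    intro j _
    rw [hqqpp j, ← hgdef j, hc]
    rw [show 1 / (3 * M2 ^ 2) * g j = g j / (3 * M2 ^ 2) by ring,
      div_le_div_iff₀ (by positivity) (by norm_num : (0:ℝ) < 3)]
    exact diag_arith (g j) (lam j) M1 M2 (hlam_ge' j) (hlam0 j) hM12 hM2pos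
  have hB : ∏ p ∈ P1, (c * (a p.2.succ - a p.1.castSucc)) ≤ K := by
    rw [hK]
    refine Finset.prod_le_prod ?_ ?_
    · intro p hp
      have hplt : p.1 < p.2 := by
        rw [hP1] at hp
        simp only [Finset.mem_filter, Finset.mem_univ, true_and] at hp
        exact hp
      refine mul_nonneg hcpos.le (sub_nonneg.2 (ha ?_))
      rw [Fin.le_def]
      rw [Fin.lt_def] at hplt
      simp only [Fin.val_succ, Fin.coe_castSucc]
      omega
    · intro p hp
      have hplt : p.1 < p.2 := by
        rw [hP1] at hp
        simp only [Finset.mem_filter, Finset.mem_univ, true_and] at hp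
        exact hp
      have hd : lam p.2 ≤ a p.2.succ - a p.1.succ := by
        have h1 := hlamg p.2
        rw [hgdef] at h1
        have := hmono_pair p hplt
        linarith
      have hd0 : (0:ℝ) ≤ a p.2.succ - a p.1.succ := le_trans (hlam0 p.2) hd
      have he0 : (0:ℝ) ≤ a p.1.succ - a p.1.castSucc := by rw [← hgdef]; exact hg0 p.1
      have he' : a p.1.succ - a p.1.castSucc ≤ lam p.1 * (M2 * M2) := by
        have h1 := hlam_ge' p.1
        rw [hgdef] at h1
        nlinarith [mul_nonneg (mul_nonneg (hlam0 p.1) (sub_nonneg.2 hM12)) hM2pos.le]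
      rw [hppdef, hqqdef, hc]
      rw [show 1 / (3 * M2 ^ 2) * (a p.2.succ - a p.1.castSucc)
          = (a p.2.succ - a p.1.castSucc) / (3 * M2 ^ 2) by ring,
        div_le_iff₀ (by positivity)]
      exact pair_arith _ _ _ (lam p.1) (lam p.2) M2 hd hd0 hM2ge2 he'
  calc c ^ P2.card * vand (m + 2) a
      = ∏ p ∈ P2, (c * (a p.2 - a p.1)) := e0.symm
    _ = (∏ j : Fin (m + 1), (c * (a j.succ - a j.castSucc))) *
        ∏ p ∈ P1, (c * (a p.2.succ - a p.1.castSucc)) := by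
        rw [hP2, hP1]
        exact prod_split (m + 1) (fun p => c * (a p.2 - a p.1))
    _ ≤ (∏ j : Fin (m + 1), (qq j - pp j)) * K := by
        refine mul_le_mul hA hB (Finset.prod_nonneg ?_) (Finset.prod_nonneg ?_)
        · intro p hp
          have hplt : p.1 < p.2 := by
            rw [hP1] at hp
            simp only [Finset.mem_filter, Finset.mem_univ, true_and] at hp
            exact hp
          refine mul_nonneg hcpos.le (sub_nonneg.2 (ha ?_))
          rw [Fin.le_def]
          rw [Fin.lt_def] at hplt
          simp only [Fin.val_succ, Fin.coe_castSucc]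
          omega
        · intro j _
          rw [hqqpp j]
          linarith [hlam0 j]
    _ = K * ∏ j : Fin (m + 1), (qq j - pp j) := mul_comm _ _
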